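/- Let k have characteristic 2 and let L be a weakly alternating Lie superalgebra in Ver₄⁺(k), i.e., [x,x] ∈ im D for all x ∈ L. Then the quadratic map Q : L₁ → L₀ maps im D into im D, and it induces a well-defined quadratic map Q̄ : L₁/im D → L₀/im D, giving the cohomology H(L) = ker D/im D, with grading H₀ = L₀/im D, H₁ = L₁/im D, the structure of a Lie superalgebra over k. -/
import Mathlib


/-- Let `k` have characteristic 2 and `L` a weakly alternating Lie
superalgebra in `Ver₄⁺(k)`: an operadic Lie algebra `(L, D, β)` satisfying the PBW
condition (`Dx = 0 → [x,x] = 0`), with a super-structure `L₀, L₁`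
(`L₀ ⊓ L₁ = im D`, `L₀ ⊔ L₁ = ker D`, `[Lᵢ, Lⱼ] ⊆ L_{i+j}`) and squaring map
`Q : L₁ → L₀` (`Q(Dx) = [x,x]`, `Q(y₁+y₂) − Qy₁ − Qy₂ = [y₁,y₂]`,
`[Q(y),x] = [y,[y,x]]`), such that `[x,x] ∈ im D` for all `x` (weakly alternating).
Then `Q` maps `im D` into `im D` and descends to a well-defined squaring map
`Q̄ : L₁/im D → L₀/im D`, and the bracket descends to the cohomology
`H(L) = ker D/im D` with grading `H₀ = L₀/im D`, `H₁ = L₁/im D`, giving `H(L)` the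
structure of a Lie superalgebra over `k` (the superalgebra identities hold modulo
`im D`). -/
theorem stmt18 (k : Type*) [Field k] [CharP k 2]
    (L : Type*) [AddCommGroup L] [Module k L]
    (D : L →ₗ[k] L) (hD : D ∘ₗ D = 0)
    (β : L →ₗ[k] L →ₗ[k] L)
    (hskew : ∀ x y : L, β x y = β y x + β (D y) (D x))
    (hder : ∀ x y : L, D (β x y) = β (D x) y + β x (D y))
    (hjac : ∀ x y z : L,
      β (β x y) z + β (β z x) y + β (β y z) x
        + β (β (D x) y) (D z) + β (β (D z) x) (D y) + β (β (D y) z) (D x) = 0)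
    (hpbw : ∀ x : L, D x = 0 → β x x = 0)
    (L₀ L₁ : Submodule k L)
    (hinf : L₀ ⊓ L₁ = LinearMap.range D)
    (hsup : L₀ ⊔ L₁ = LinearMap.ker D)
    (h00 : ∀ x ∈ L₀, ∀ y ∈ L₀, β x y ∈ L₀)
    (h01 : ∀ x ∈ L₀, ∀ y ∈ L₁, β x y ∈ L₁)
    (h10 : ∀ x ∈ L₁, ∀ y ∈ L₀, β x y ∈ L₁)
    (h11 : ∀ x ∈ L₁, ∀ y ∈ L₁, β x y ∈ L₀)
    (Q : L → L)
    (hQmap : ∀ y ∈ L₁, Q y ∈ L₀)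
    (hQD : ∀ x : L, Q (D x) = β x x)
    (hQsmul : ∀ (c : k), ∀ y ∈ L₁, Q (c • y) = (c ^ 2) • Q y)
    (hQadd : ∀ y₁ ∈ L₁, ∀ y₂ ∈ L₁, Q (y₁ + y₂) - Q y₁ - Q y₂ = β y₁ y₂)
    (hQbr : ∀ y ∈ L₁, ∀ x : L, β (Q y) x = β y (β y x))
    (hwalt : ∀ x : L, β x x ∈ LinearMap.range D) :
    (∀ z ∈ LinearMap.range D, Q z ∈ LinearMap.range D) ∧
    (∀ y ∈ L₁, ∀ z ∈ LinearMap.range D, Q (y + z) - Q y ∈ LinearMap.range D) ∧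
    (∀ x : L, D x = 0 → ∀ y : L, β x (D y) ∈ LinearMap.range D) ∧
    (∀ x y : L, D x = 0 → D y = 0 → β x y - β y x ∈ LinearMap.range D) ∧
    (∀ y₁ ∈ L₁, ∀ y₂ ∈ L₁,
      Q (y₁ + y₂) - Q y₁ - Q y₂ - β y₁ y₂ ∈ LinearMap.range D) ∧
    (∀ y ∈ L₁, ∀ x ∈ LinearMap.ker D,
      β (Q y) x - β y (β y x) ∈ LinearMap.range D) := by
  have hker : L₁ ≤ LinearMap.ker D := le_trans le_sup_right hsup.le
  have himD : LinearMap.range D ≤ L₁ := hinf ▸ inf_le_right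
  have himD0 : LinearMap.range D ≤ L₀ := hinf ▸ inf_le_left
  refine ⟨?_, ?_, ?_, ?_, ?_, ?_⟩
  · rintro z ⟨x, rfl⟩
    rw [hQD]
    exact hwalt x
  · rintro y hy z hz
    obtain ⟨x, rfl⟩ := hz
    have h1 : Q (y + D x) - Q y - Q (D x) = β y (D x) := hQadd y hy (D x) (himD ⟨x, rfl⟩)
    have h2 : β y (D x) ∈ LinearMap.range D := by
      rw [← hinf]
      exact ⟨h11 y hy (D x) (himD ⟨x, rfl⟩), h10 y hy (D x) (himD0 ⟨x, rfl⟩)⟩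
    have h3 : Q (D x) ∈ LinearMap.range D := by
      rw [hQD]; exact hwalt x
    have : Q (y + D x) - Q y = β y (D x) + Q (D x) := by
      rw [← h1]; abel
    rw [this]
    exact add_mem h2 h3
  · intro x hx y
    refine ⟨β x y, ?_⟩
    rw [hder, hx, map_zero]
    simp
  · intro x y hx hy
    rw [hskew x y, hy, map_zero]
    simp
  · intro y₁ h₁ y₂ h₂
    rw [hQadd y₁ h₁ y₂ h₂]
    simp
  · intro y hy x _
    rw [hQbr y hy x]
    simp
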